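/- Let L be a bounded distributive lattice. A function f : L^n → L is a lattice polynomial function if and only if f(x y z) = med(f(x 0 z), y, f(x 1 z)) for every x ∈ L^{k−1}, y ∈ L, z ∈ L^{n−k}, 1 ≤ k ≤ n, where med is the ternary median med(a,b,c) = (a ∨ b) ∧ (a ∨ c) ∧ (b ∨ c). -/

import Mathlib

variable {X : Type*}

/-- The string consisting of the single letter `g y` if `y` is nonempty, and the
empty string if `y` is empty (the convention `g ε = ε`). -/
def strOf (g : List X → X) (y : List X) : List X :=
  match y with
  | [] => []
  | _ => [g y]

/-- Associativity for functions on strings. -/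
def AssocStar (g : List X → X) : Prop :=
  ∀ x y z x' y' z' : List X, x ++ y ++ z = x' ++ y' ++ z' →
    g (x ++ strOf g y ++ z) = g (x' ++ strOf g y' ++ z')

/-- Range-idempotency for functions on strings. -/
def RangeIdem (g : List X → X) : Prop :=
  ∀ x : List X, x ≠ [] → ∀ n : ℕ, 1 ≤ n → g (List.replicate n (g x)) = g x

/-- Application of an `n`-ary function to a list of length `n`. -/
def liftF {n : ℕ} (f : (Fin n → X) → X) (l : List X) (h : l.length = n) : X :=
  f fun i => l.get (Fin.cast h.symm i)

/-- Associativity for `n`-ary functions. -/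
def AssocFin {n : ℕ} (f : (Fin n → X) → X) : Prop :=
  ∀ (x z x' z' y y' : List X) (hy : y.length = n) (hy' : y'.length = n),
    x.length + z.length = n - 1 → x'.length + z'.length = n - 1 →
    x ++ y ++ z = x' ++ y' ++ z' →
    ∀ (h : (x ++ [liftF f y hy] ++ z).length = n)
      (h' : (x' ++ [liftF f y' hy'] ++ z').length = n),
      liftF f (x ++ [liftF f y hy] ++ z) h = liftF f (x' ++ [liftF f y' hy'] ++ z') h'

variable {L : Type*} [DistribLattice L] [BoundedOrder L]

/-- Lattice polynomial functions: representable in disjunctive normal form. -/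
def IsPolynomialFn {n : ℕ} (f : (Fin n → L) → L) : Prop :=
  ∃ α : Finset (Fin n) → L,
    ∀ x : Fin n → L, f x = Finset.univ.sup fun I : Finset (Fin n) => α I ⊓ I.inf x

/-- The ternary median. -/
def med (a b c : L) : L := (a ⊔ b) ⊓ (a ⊔ c) ⊓ (b ⊔ c)

/-- The characteristic vector of `I ⊆ [n]`. -/
def charVec {n : ℕ} (I : Finset (Fin n)) : Fin n → L := fun i => if i ∈ I then ⊤ else ⊥

/-- A function on strings all of whose `n`-ary components (`n ≥ 1`) are polynomial. -/
def IsPolyStar (g : List L → L) : Prop :=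
  ∀ n : ℕ, 1 ≤ n → IsPolynomialFn fun x : Fin n → L => g (List.ofFn x)

lemma med_of_le' {a c : L} (h : a ≤ c) (y : L) : med a y c = (a ⊔ y) ⊓ c := by
  unfold med
  rw [sup_eq_right.mpr h, inf_eq_left.mpr]
  exact le_sup_of_le_right inf_le_right

lemma med_sup' (A B y : L) : med A y (A ⊔ B) = A ⊔ (B ⊓ y) := by
  rw [med_of_le' le_sup_left, inf_comm B y, sup_inf_left]

lemma aux_alg (a c y p : L) (h : a ≤ c) :
    ((a ⊔ y) ⊓ c) ⊓ p = (a ⊓ p) ⊔ (c ⊓ (y ⊓ p)) := by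
  rw [inf_sup_right, inf_eq_left.mpr h, inf_sup_right, inf_assoc, inf_left_comm]

/-- `f : Lⁿ → L` is a lattice polynomial function if and only if
`f(x y z) = med(f(x 0 z), y, f(x 1 z))` for every position and every tuple. -/
theorem stmt6 {n : ℕ} (f : (Fin n → L) → L) :
    IsPolynomialFn f ↔ ∀ (w : Fin n → L) (k : Fin n) (y : L),
      f (Function.update w k y) =
        med (f (Function.update w k ⊥)) y (f (Function.update w k ⊤)) := by
  constructor
  · rintro ⟨α, hα⟩ w k y
    set A : L := (Finset.univ.filter (fun I : Finset (Fin n) => k ∉ I)).sup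
      (fun I => α I ⊓ I.inf w) with hA
    set B : L := (Finset.univ.filter (fun I : Finset (Fin n) => k ∈ I)).sup
      (fun I => α I ⊓ (I.erase k).inf w) with hB
    have hg : ∀ u : L, f (Function.update w k u) = A ⊔ (B ⊓ u) := by
      intro u
      rw [hα]
      rw [← Finset.filter_union_filter_not_eq (fun I : Finset (Fin n) => k ∈ I) Finset.univ,
        Finset.sup_union]
      have h1 : (Finset.univ.filter (fun I : Finset (Fin n) => k ∈ I)).sup
          (fun I => α I ⊓ I.inf (Function.update w k u)) = B ⊓ u := by
        rw [hB, Finset.sup_inf_distrib_right]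
        apply Finset.sup_congr rfl
        intro I hI
        have hk : k ∈ I := (Finset.mem_filter.mp hI).2
        have : I.inf (Function.update w k u) = u ⊓ (I.erase k).inf w := by
          conv_lhs => rw [← Finset.insert_erase hk]
          rw [Finset.inf_insert, Function.update_self]
          congr 1
          apply Finset.inf_congr rfl
          intro i hi
          exact Function.update_of_ne (Finset.ne_of_mem_erase hi) _ _
        rw [this, ← inf_assoc, inf_comm (α I) u, inf_assoc, inf_comm u]
      have h2 : (Finset.univ.filter (fun I : Finset (Fin n) => ¬ k ∈ I)).sup
          (fun I => α I ⊓ I.inf (Function.update w k u)) = A := by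
        rw [hA]
        apply Finset.sup_congr rfl
        intro I hI
        have hk : k ∉ I := (Finset.mem_filter.mp hI).2
        congr 1
        apply Finset.inf_congr rfl
        intro i hi
        exact Function.update_of_ne (by rintro rfl; exact hk hi) _ _
      rw [h1, h2, sup_comm]
    rw [hg, hg, hg]
    simp only [inf_bot_eq, sup_bot_eq, inf_top_eq]
    exact (med_sup' A B y).symm
  · intro h
    have hmono : ∀ (w : Fin n → L) (k : Fin n),
        f (Function.update w k ⊥) ≤ f (Function.update w k ⊤) := by
      intro w k
      calc f (Function.update w k ⊥)
          = med (f (Function.update w k ⊥)) ⊥ (f (Function.update w k ⊤)) := h w k ⊥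
        _ ≤ ⊥ ⊔ f (Function.update w k ⊤) := inf_le_right
        _ = f (Function.update w k ⊤) := bot_sup_eq _
    refine ⟨fun I => f (charVec I), fun x => ?_⟩
    have key : ∀ S : Finset (Fin n), f x = S.powerset.sup
        (fun I => f (fun i => if i ∈ S then charVec I i else x i) ⊓ I.inf x) := by
      intro S
      induction S using Finset.induction_on with
      | empty => simp
      | insert k S hk IH =>
        rw [Finset.powerset_insert, Finset.sup_union, Finset.sup_image]
        set g1 : Finset (Fin n) → L :=
          fun I => f (fun i => if i ∈ insert k S then charVec I i else x i) ⊓ I.inf x with hg1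
        rw [IH, ← Finset.sup_sup]
        apply Finset.sup_congr rfl
        intro I hI
        have hIS : I ⊆ S := Finset.mem_powerset.mp hI
        have hkI : k ∉ I := fun hmem => hk (hIS hmem)
        set wv : Fin n → L := fun i => if i ∈ S then charVec I i else x i with hwv
        have hvk : wv k = x k := if_neg hk
        have e0 : Function.update wv k ⊥ =
            fun i => if i ∈ insert k S then charVec I i else x i := by
          funext i
          rcases eq_or_ne i k with rfl | hik
          · simp [charVec, hkI]
          · simp [Function.update_of_ne hik, hwv, Finset.mem_insert, hik]
        have e1 : Function.update wv k ⊤ =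
            fun i => if i ∈ insert k S then charVec (insert k I) i else x i := by
          funext i
          rcases eq_or_ne i k with rfl | hik
          · simp [charVec]
          · simp [Function.update_of_ne hik, hwv, charVec, Finset.mem_insert, hik]
        have hfv : f wv = med (f (Function.update wv k ⊥)) (x k)
            (f (Function.update wv k ⊤)) := by
          conv_lhs => rw [show wv = Function.update wv k (x k) from by
            rw [← hvk, Function.update_eq_self]]
          exact h wv k (x k)
        show f wv ⊓ I.inf x = g1 I ⊔ g1 (insert k I)
        rw [hfv, med_of_le' (hmono wv k), aux_alg _ _ _ _ (hmono wv k), hg1, e0, e1]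
        simp [Finset.inf_insert]
    rw [key Finset.univ, Finset.powerset_univ]
    apply Finset.sup_congr rfl
    intro I _
    have : (fun i => if i ∈ Finset.univ then charVec I i else x i) = charVec I := by
      funext i; simp
    rw [this]
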